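/- arXiv:2006.16526 — 4 statements merged into one kernel-verified Lean document; each statement's English description precedes it below -/
import Mathlib

section
/- Consider the linear system arising from the 1D fully-discrete implicit finite volume scheme: for each species m and grid index j, c_j + A_{j+1/2}(c_j/E_j - c_{j+1}/E_{j+1}) + A_{j-1/2}(c_j/E_j - c_{j-1}/E_{j-1}) = b_j with no-flux boundary conditions (boundary fluxes zero), where A_{j±1/2} ≥ 0 and E_j > 0. If b_j ≥ 0 for all j, then any solution satisfies c_j ≥ 0 for all j. -/
open Finset

/-- Positivity preservation for the 1D fully-discrete implicit finite volume
scheme: if `E_j > 0`, the coefficients `A_{j±1/2} ≥ 0` vanish across the domain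
boundary (no-flux), the linear system
`c_j + A_{j+1/2}(c_j/E_j - c_{j+1}/E_{j+1}) + A_{j-1/2}(c_j/E_j - c_{j-1}/E_{j-1}) = b_j`
holds on the grid, and `b_j ≥ 0`, then `c_j ≥ 0` on the grid.
Here `A j` denotes `A_{j+1/2}`. -/
theorem implicit_scheme_positivity_1d (N : ℤ) (hN : 0 ≤ N)
    (c E b A : ℤ → ℝ)
    (hE : ∀ j ∈ Finset.Icc (-N) N, 0 < E j)
    (hA : ∀ j, 0 ≤ A j)
    (hbdL : A (-N - 1) = 0) (hbdR : A N = 0)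
    (heq : ∀ j ∈ Finset.Icc (-N) N,
      c j + A j * (c j / E j - c (j + 1) / E (j + 1))
          + A (j - 1) * (c j / E j - c (j - 1) / E (j - 1)) = b j)
    (hb : ∀ j ∈ Finset.Icc (-N) N, 0 ≤ b j) :
    ∀ j ∈ Finset.Icc (-N) N, 0 ≤ c j := by
  have hne : (Finset.Icc (-N) N).Nonempty := ⟨0, Finset.mem_Icc.mpr (by omega)⟩
  obtain ⟨j0, hj0, hmin⟩ := Finset.exists_min_image (Finset.Icc (-N) N)
    (fun j => c j / E j) hne
  simp only [Finset.mem_Icc] at hj0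
  -- right neighbor term ≤ 0 times A
  have hR : 0 ≤ A j0 * (c j0 / E j0 - c (j0 + 1) / E (j0 + 1)) →
      A j0 * (c j0 / E j0 - c (j0 + 1) / E (j0 + 1)) ≤ 0 ∨ True := fun _ => Or.inr trivial
  have hterm1 : A j0 * (c j0 / E j0 - c (j0 + 1) / E (j0 + 1)) ≤ 0 := by
    rcases eq_or_lt_of_le hj0.2 with h | h
    · rw [h, hbdR]; simp
    · have hmem : j0 + 1 ∈ Finset.Icc (-N) N := by simp [Finset.mem_Icc]; omega
      have := hmin _ hmem
      have : c j0 / E j0 - c (j0 + 1) / E (j0 + 1) ≤ 0 := by linarith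
      exact mul_nonpos_of_nonneg_of_nonpos (hA j0) this
  have hterm2 : A (j0 - 1) * (c j0 / E j0 - c (j0 - 1) / E (j0 - 1)) ≤ 0 := by
    rcases eq_or_lt_of_le hj0.1 with h | h
    · rw [← h]
      have : (-N : ℤ) - 1 = -N - 1 := rfl
      rw [show (-N : ℤ) - 1 = -N - 1 from rfl, hbdL]; simp
    · have hmem : j0 - 1 ∈ Finset.Icc (-N) N := by simp [Finset.mem_Icc]; omega
      have := hmin _ hmem
      have : c j0 / E j0 - c (j0 - 1) / E (j0 - 1) ≤ 0 := by linarith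
      exact mul_nonpos_of_nonneg_of_nonpos (hA _) this
  have hj0' : j0 ∈ Finset.Icc (-N) N := by simp [Finset.mem_Icc]; omega
  have hc0 : 0 ≤ c j0 := by
    have := heq j0 hj0'
    have := hb j0 hj0'
    linarith
  have hu0 : 0 ≤ c j0 / E j0 := div_nonneg hc0 (hE j0 hj0').le
  intro j hj
  have hEj := hE j hj
  have := hmin j hj
  have : 0 ≤ c j / E j := le_trans hu0 this
  have := (div_nonneg_iff.mp this)
  rcases this with ⟨h1, _⟩ | ⟨_, h2⟩
  · exact h1
  · nlinarith [hEj]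
end

section
/- Let E_j > 0 and A_{j+1/2} ≥ 0 for j in a finite index set, and suppose (c_j) solves c_j + A_{j+1/2}(c_j/E_j - c_{j+1}/E_{j+1}) + A_{j-1/2}(c_j/E_j - c_{j-1}/E_{j-1}) = b_j with zero boundary fluxes. If the minimum of c_j/E_j over j is attained at j₀ and c_{j₀} < 0, then b_{j₀} < 0. (Contrapositive: b ≥ 0 implies c ≥ 0.) -/
open Finset

/-- Minimum-principle step of the positivity proof: if the minimum of `c_j/E_j`
over the grid is attained at `j₀` and `c_{j₀} < 0`, then the right-hand side
`b_{j₀}` of the linear system is negative. `A j` denotes `A_{j+1/2}`, with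
zero boundary fluxes `A_{-N-1/2} = A_{N+1/2} = 0`. -/
theorem minimum_principle_step (N : ℤ) (hN : 0 ≤ N)
    (c E b A : ℤ → ℝ)
    (hE : ∀ j ∈ Finset.Icc (-N) N, 0 < E j)
    (hA : ∀ j, 0 ≤ A j)
    (hbdL : A (-N - 1) = 0) (hbdR : A N = 0)
    (heq : ∀ j ∈ Finset.Icc (-N) N,
      c j + A j * (c j / E j - c (j + 1) / E (j + 1))
          + A (j - 1) * (c j / E j - c (j - 1) / E (j - 1)) = b j)
    (j₀ : ℤ) (hj₀ : j₀ ∈ Finset.Icc (-N) N)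
    (hmin : ∀ j ∈ Finset.Icc (-N) N, c j₀ / E j₀ ≤ c j / E j)
    (hneg : c j₀ < 0) :
    b j₀ < 0 := by
  have hb := heq j₀ hj₀
  rw [Finset.mem_Icc] at hj₀
  have h1 : A j₀ * (c j₀ / E j₀ - c (j₀ + 1) / E (j₀ + 1)) ≤ 0 := by
    rcases eq_or_lt_of_le hj₀.2 with h | h
    · rw [h, hbdR]; ring_nf; simp
    · have hmem : j₀ + 1 ∈ Finset.Icc (-N) N := by
        rw [Finset.mem_Icc]; omega
      have := hmin _ hmem
      exact mul_nonpos_of_nonneg_of_nonpos (hA _) (by linarith)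
  have h2 : A (j₀ - 1) * (c j₀ / E j₀ - c (j₀ - 1) / E (j₀ - 1)) ≤ 0 := by
    rcases eq_or_lt_of_le hj₀.1 with h | h
    · rw [← h, hbdL]; ring_nf; simp
    · have hmem : j₀ - 1 ∈ Finset.Icc (-N) N := by
        rw [Finset.mem_Icc]; omega
      have := hmin _ hmem
      exact mul_nonpos_of_nonneg_of_nonpos (hA _) (by linarith)
  linarith
end

section
/- Let c_j(t) > 0 and f_j(t) be differentiable functions for j = -N,...,N satisfying the semi-discrete scheme dc_j/dt = -(F_{j+1/2} - F_{j-1/2})/Δx with F_{j+1/2} = -(1/Δx)·exp(-f_{j+1/2})·(c_{j+1}/exp(-f_{j+1}) - c_j/exp(-f_j)), no-flux boundary conditions F_{-N-1/2} = F_{N+1/2} = 0, and suppose f_j = Σ_i c_i T_{j-i} with symmetric tensor T_{j-i} = T_{i-j}. Then the discrete free energy E_Δ(t) = Δx Σ_j c_j log(c_j/exp(-f_j/2)) satisfies dE_Δ/dt = -D_Δ ≤ 0, where D_Δ = (1/Δx)Σ_j exp(-f_{j+1/2})·(1/β_j)·(c_{j+1}/exp(-f_{j+1}) - c_j/exp(-f_j))²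 with β_j between c_j/exp(-f_j) and c_{j+1}/exp(-f_{j+1}). -/
open Finset Real

private lemma icc_insert_top {a b : ℤ} (h : a ≤ b + 1) :
    Finset.Icc a (b + 1) = insert (b + 1) (Finset.Icc a b) := by
  ext x; simp only [Finset.mem_Icc, Finset.mem_insert]; omega

private lemma icc_insert_bot {a b : ℤ} (h : a - 1 ≤ b) :
    Finset.Icc (a - 1) b = insert (a - 1) (Finset.Icc a b) := by
  ext x; simp only [Finset.mem_Icc, Finset.mem_insert]; omega

private lemma tele (h : ℤ → ℝ) (a : ℤ) : ∀ b : ℤ, a - 1 ≤ b →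
    ∑ j ∈ Finset.Icc a b, (h (j - 1) - h j) = h (a - 1) - h b := by
  refine Int.le_induction ?_ ?_
  · rw [show Finset.Icc a (a - 1) = ∅ by apply Finset.Icc_eq_empty; omega]
    simp
  · intro n hn ih
    rw [icc_insert_top (by omega), Finset.sum_insert (by simp)]
    rw [ih, show n + 1 - 1 = n by ring]; ring

private lemma reindex (h : ℤ → ℝ) (a b : ℤ) :
    ∑ j ∈ Finset.Icc a b, h j = ∑ j ∈ Finset.Icc (a - 1) (b - 1), h (j + 1) := by
  rw [show Finset.Icc a b = (Finset.Icc (a - 1) (b - 1)).map (addRightEmbedding 1) by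
    rw [Finset.map_add_right_Icc]; congr 1 <;> ring, Finset.sum_map]
  simp [addRightEmbedding]

private lemma log_mvt_lt {a b : ℝ} (ha : 0 < a) (hab : a < b) :
    ∃ β ∈ Set.Ioo a b, Real.log b - Real.log a = (b - a) / β := by
  obtain ⟨ξ, hξ, heq⟩ := exists_hasDerivAt_eq_slope Real.log (fun x => x⁻¹) hab
    (Real.continuousOn_log.mono (fun x hx => by
      simp only [Set.mem_compl_iff, Set.mem_singleton_iff]
      exact ne_of_gt (lt_of_lt_of_le ha hx.1)))
    (fun x hx => Real.hasDerivAt_log (ne_of_gt (lt_trans ha hx.1)))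
  refine ⟨ξ, hξ, ?_⟩
  have hξ0 : ξ ≠ 0 := ne_of_gt (lt_trans ha hξ.1)
  field_simp at heq ⊢
  rw [eq_div_iff (sub_ne_zero.2 (ne_of_gt hab))] at heq
  linarith [heq]

private lemma log_mvt {a b : ℝ} (ha : 0 < a) (hb : 0 < b) :
    ∃ β ∈ Set.uIcc a b, 0 < β ∧ Real.log b - Real.log a = (b - a) / β := by
  rcases lt_trichotomy a b with h | h | h
  · obtain ⟨β, hβ, heq⟩ := log_mvt_lt ha h
    exact ⟨β, Set.mem_uIcc.2 (Or.inl ⟨hβ.1.le, hβ.2.le⟩), lt_trans ha hβ.1, heq⟩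
  · exact ⟨a, Set.mem_uIcc.2 (Or.inl ⟨le_refl a, h.le⟩), ha, by rw [h]; simp⟩
  · obtain ⟨β, hβ, heq⟩ := log_mvt_lt hb h
    refine ⟨β, Set.mem_uIcc.2 (Or.inr ⟨hβ.1.le, hβ.2.le⟩), lt_trans hb hβ.1, ?_⟩
    have : (a - b) / β = -((b - a) / β) := by ring
    linarith [heq, this]

/-- Semi-discrete free energy dissipation (single species): for the 1D
semi-discrete finite volume scheme with positive cell averages `c j t`,
convolution field `f_j = ∑_i c_i T_{j-i}` with symmetric tensor `T`, positive
interfacial averages `g j t` (playing the role of `exp(-f_{j+1/2})`), fluxes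
`F_{j+1/2} = -(1/Δx)·g·(c_{j+1}/e^{-f_{j+1}} - c_j/e^{-f_j})` and no-flux
boundary conditions, the discrete free energy
`E_Δ(t) = Δx ∑_j c_j log(c_j / e^{-f_j/2})` satisfies `dE_Δ/dt = -D_Δ ≤ 0`,
where `D_Δ = (1/Δx) ∑_j g_j (1/β_j)(c_{j+1}/e^{-f_{j+1}} - c_j/e^{-f_j})²`
with `β_j` between `c_j/e^{-f_j}` and `c_{j+1}/e^{-f_{j+1}}`. -/
theorem semi_discrete_energy_dissipation (N : ℤ) (hN : 0 ≤ N)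
    (Δx : ℝ) (hΔx : 0 < Δx)
    (c f g F : ℤ → ℝ → ℝ) (T : ℤ → ℝ)
    (hT : ∀ n, T n = T (-n))
    (hcpos : ∀ j ∈ Finset.Icc (-N) N, ∀ t : ℝ, 0 < c j t)
    (hgpos : ∀ j, ∀ t : ℝ, 0 < g j t)
    (hf : ∀ j, ∀ t : ℝ, f j t = ∑ i ∈ Finset.Icc (-N) N, c i t * T (j - i))
    (hF : ∀ j ∈ Finset.Icc (-N) (N - 1), ∀ t : ℝ,
      F j t = -(1 / Δx) * g j t *
        (c (j + 1) t / Real.exp (-f (j + 1) t) - c j t / Real.exp (-f j t)))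
    (hbdL : ∀ t : ℝ, F (-N - 1) t = 0) (hbdR : ∀ t : ℝ, F N t = 0)
    (hode : ∀ j ∈ Finset.Icc (-N) N, ∀ t : ℝ,
      HasDerivAt (c j) (-(F j t - F (j - 1) t) / Δx) t) :
    ∀ t : ℝ, ∃ β : ℤ → ℝ,
      (∀ j ∈ Finset.Icc (-N) (N - 1),
        β j ∈ Set.uIcc (c j t / Real.exp (-f j t))
          (c (j + 1) t / Real.exp (-f (j + 1) t))) ∧
      HasDerivAt
        (fun s => Δx * ∑ j ∈ Finset.Icc (-N) N,
          c j s * Real.log (c j s / Real.exp (-f j s / 2)))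
        (-(1 / Δx * ∑ j ∈ Finset.Icc (-N) (N - 1),
          g j t * (1 / β j) *
            (c (j + 1) t / Real.exp (-f (j + 1) t)
              - c j t / Real.exp (-f j t)) ^ 2)) t ∧
      0 ≤ 1 / Δx * ∑ j ∈ Finset.Icc (-N) (N - 1),
          g j t * (1 / β j) *
            (c (j + 1) t / Real.exp (-f (j + 1) t)
              - c j t / Real.exp (-f j t)) ^ 2 := by
  intro t
  set u : ℤ → ℝ := fun j => c j t / Real.exp (-f j t) with hu_def
  have hupos : ∀ j ∈ Finset.Icc (-N) N, 0 < u j := fun j hj =>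
    div_pos (hcpos j hj t) (Real.exp_pos _)
  -- choose β via the mean value theorem for log
  have key : ∀ j : ℤ, ∃ b : ℝ, j ∈ Finset.Icc (-N) (N - 1) →
      b ∈ Set.uIcc (u j) (u (j + 1)) ∧ 0 < b ∧
      Real.log (u (j + 1)) - Real.log (u j) = (u (j + 1) - u j) / b := by
    intro j
    by_cases hj : j ∈ Finset.Icc (-N) (N - 1)
    · have hj1 : j ∈ Finset.Icc (-N) N := by
        simp only [Finset.mem_Icc] at *; omega
      have hj2 : j + 1 ∈ Finset.Icc (-N) N := by
        simp only [Finset.mem_Icc] at *; omega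
      obtain ⟨b, h1, h2, h3⟩ := log_mvt (hupos j hj1) (hupos (j + 1) hj2)
      exact ⟨b, fun _ => ⟨h1, h2, h3⟩⟩
    · exact ⟨1, fun h => absurd h hj⟩
  choose β hβ using key
  refine ⟨β, fun j hj => (hβ j hj).1, ?_, ?_⟩
  · -- the derivative identity
    set c' : ℤ → ℝ := fun j => -(F j t - F (j - 1) t) / Δx with hc'def
    have hc' : ∀ j ∈ Finset.Icc (-N) N, HasDerivAt (c j) (c' j) t :=
      fun j hj => hode j hj t
    set f' : ℤ → ℝ := fun j => ∑ i ∈ Finset.Icc (-N) N, c' i * T (j - i) with hf'def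
    have hfd : ∀ j : ℤ, HasDerivAt (fun s => f j s) (f' j) t := by
      intro j
      have heq : (fun s => f j s)
          = fun s => ∑ i ∈ Finset.Icc (-N) N, c i s * T (j - i) := by
        funext s; exact hf j s
      rw [heq]
      exact HasDerivAt.fun_sum (fun i hi => (hc' i hi).mul_const _)
    -- rewrite the energy functional
    have hEfun : (fun s => Δx * ∑ j ∈ Finset.Icc (-N) N,
          c j s * Real.log (c j s / Real.exp (-f j s / 2)))
        = fun s => Δx * ∑ j ∈ Finset.Icc (-N) N,
          c j s * (Real.log (c j s) + f j s / 2) := by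
      funext s
      congr 1
      apply Finset.sum_congr rfl
      intro j hj
      rw [Real.log_div (ne_of_gt (hcpos j hj s)) (Real.exp_ne_zero _),
        Real.log_exp]
      ring
    rw [hEfun]
    have hterm : ∀ j ∈ Finset.Icc (-N) N,
        HasDerivAt (fun s => c j s * (Real.log (c j s) + f j s / 2))
          (c' j * (Real.log (c j t) + f j t / 2)
            + c j t * (c' j / c j t + f' j / 2)) t :=
      fun j hj => (hc' j hj).mul
        (((hc' j hj).log (ne_of_gt (hcpos j hj t))).add ((hfd j).div_const 2))
    have hE' := (HasDerivAt.fun_sum hterm).const_mul Δx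
    -- now massage the derivative value
    have hval : Δx * ∑ j ∈ Finset.Icc (-N) N,
          (c' j * (Real.log (c j t) + f j t / 2)
            + c j t * (c' j / c j t + f' j / 2))
        = -(1 / Δx * ∑ j ∈ Finset.Icc (-N) (N - 1),
          g j t * (1 / β j) * (u (j + 1) - u j) ^ 2) := by
      -- step 1: simplify the summand
      have step1 : ∑ j ∈ Finset.Icc (-N) N,
            (c' j * (Real.log (c j t) + f j t / 2)
              + c j t * (c' j / c j t + f' j / 2))
          = ∑ j ∈ Finset.Icc (-N) N,
            (c' j * (Real.log (c j t) + f j t / 2) + c' j + c j t * f' j / 2) := by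
        apply Finset.sum_congr rfl
        intro j hj
        have hc0 : c j t ≠ 0 := ne_of_gt (hcpos j hj t)
        field_simp
        ring
      -- step 2: symmetry swap
      have step2 : ∑ j ∈ Finset.Icc (-N) N, c j t * f' j
          = ∑ j ∈ Finset.Icc (-N) N, c' j * f j t := by
        have hTsym : ∀ j i : ℤ, T (j - i) = T (i - j) := by
          intro j i; rw [hT (j - i)]; congr 1; ring
        calc ∑ j ∈ Finset.Icc (-N) N, c j t * f' j
            = ∑ j ∈ Finset.Icc (-N) N, ∑ i ∈ Finset.Icc (-N) N,
              c j t * (c' i * T (j - i)) := by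
              apply Finset.sum_congr rfl; intro j hj
              rw [hf'def]; exact Finset.mul_sum _ _ _
          _ = ∑ i ∈ Finset.Icc (-N) N, ∑ j ∈ Finset.Icc (-N) N,
              c j t * (c' i * T (j - i)) := Finset.sum_comm
          _ = ∑ i ∈ Finset.Icc (-N) N, c' i * f i t := by
              apply Finset.sum_congr rfl; intro i hi
              rw [hf i t, Finset.mul_sum]
              apply Finset.sum_congr rfl; intro j hj
              rw [hTsym j i]; ring
      -- step 3: mass conservation
      have step3 : ∑ j ∈ Finset.Icc (-N) N, c' j = 0 := by
        have h1 : ∀ j : ℤ, c' j = ((fun k => F k t) (j - 1) - (fun k => F k t) j) / Δx := by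
          intro j; simp only [hc'def]; ring
        calc ∑ j ∈ Finset.Icc (-N) N, c' j
            = (∑ j ∈ Finset.Icc (-N) N,
                ((fun k => F k t) (j - 1) - (fun k => F k t) j)) / Δx := by
              rw [Finset.sum_div]; exact Finset.sum_congr rfl fun j _ => h1 j
          _ = ((fun k => F k t) (-N - 1) - (fun k => F k t) N) / Δx := by
              rw [tele (fun k => F k t) (-N) N (by omega)]
          _ = 0 := by simp only [hbdL, hbdR]; ring
      -- combine steps 1-3
      have hlogu : ∀ j ∈ Finset.Icc (-N) N,
          Real.log (u j) = Real.log (c j t) + f j t := by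
        intro j hj
        rw [hu_def]
        rw [Real.log_div (ne_of_gt (hcpos j hj t)) (Real.exp_ne_zero _),
          Real.log_exp]
        ring
      have step4 : ∑ j ∈ Finset.Icc (-N) N,
            (c' j * (Real.log (c j t) + f j t / 2) + c' j + c j t * f' j / 2)
          = ∑ j ∈ Finset.Icc (-N) N, c' j * Real.log (u j) := by
        have expand : ∀ j ∈ Finset.Icc (-N) N,
            c' j * (Real.log (c j t) + f j t / 2) + c' j + c j t * f' j / 2
            = c' j * Real.log (u j) + c' j + (c j t * f' j - c' j * f j t) / 2 := by
          intro j hj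
          rw [hlogu j hj]; ring
        rw [Finset.sum_congr rfl expand, Finset.sum_add_distrib,
          Finset.sum_add_distrib, step3, ← Finset.sum_div,
          show ∑ j ∈ Finset.Icc (-N) N, (c j t * f' j - c' j * f j t)
            = 0 by rw [Finset.sum_sub_distrib, step2, sub_self]]
        ring
      -- step 5: summation by parts
      have step5 : ∑ j ∈ Finset.Icc (-N) N, c' j * Real.log (u j)
          = (1 / Δx) * ∑ j ∈ Finset.Icc (-N) (N - 1),
              F j t * (Real.log (u (j + 1)) - Real.log (u j)) := by
        have habel : ∑ j ∈ Finset.Icc (-N) N,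
              (F (j - 1) t - F j t) * Real.log (u j)
            = ∑ j ∈ Finset.Icc (-N) (N - 1),
              F j t * (Real.log (u (j + 1)) - Real.log (u j)) := by
          have e1 : ∑ j ∈ Finset.Icc (-N) N, F (j - 1) t * Real.log (u j)
              = ∑ j ∈ Finset.Icc (-N - 1) (N - 1), F j t * Real.log (u (j + 1)) := by
            rw [reindex (fun j => F (j - 1) t * Real.log (u j)) (-N) N]
            apply Finset.sum_congr rfl
            intro j hj
            rw [show j + 1 - 1 = j by ring]
          have e2 : ∑ j ∈ Finset.Icc (-N - 1) (N - 1), F j t * Real.log (u (j + 1))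
              = ∑ j ∈ Finset.Icc (-N) (N - 1), F j t * Real.log (u (j + 1)) := by
            rw [show (-N - 1 : ℤ) = -N - 1 from rfl,
              show Finset.Icc (-N - 1) (N - 1) = insert (-N - 1) (Finset.Icc (-N) (N - 1)) by
                have := icc_insert_bot (a := -N) (b := N - 1) (by omega)
                simpa using this,
              Finset.sum_insert (by simp only [Finset.mem_Icc]; omega), hbdL]
            ring
          have e3 : ∑ j ∈ Finset.Icc (-N) N, F j t * Real.log (u j)
              = ∑ j ∈ Finset.Icc (-N) (N - 1), F j t * Real.log (u j) := by
            rw [show Finset.Icc (-N) N = insert N (Finset.Icc (-N) (N - 1)) by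
                have := icc_insert_top (a := -N) (b := N - 1) (by omega)
                simpa using this,
              Finset.sum_insert (by simp only [Finset.mem_Icc]; omega), hbdR]
            ring
          calc ∑ j ∈ Finset.Icc (-N) N, (F (j - 1) t - F j t) * Real.log (u j)
              = ∑ j ∈ Finset.Icc (-N) N, F (j - 1) t * Real.log (u j)
                - ∑ j ∈ Finset.Icc (-N) N, F j t * Real.log (u j) := by
                rw [← Finset.sum_sub_distrib]
                exact Finset.sum_congr rfl fun j _ => by ring
            _ = ∑ j ∈ Finset.Icc (-N) (N - 1), F j t * Real.log (u (j + 1))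
                - ∑ j ∈ Finset.Icc (-N) (N - 1), F j t * Real.log (u j) := by
                rw [e1, e2, e3]
            _ = ∑ j ∈ Finset.Icc (-N) (N - 1),
                F j t * (Real.log (u (j + 1)) - Real.log (u j)) := by
                rw [← Finset.sum_sub_distrib]
                exact Finset.sum_congr rfl fun j _ => by ring
        calc ∑ j ∈ Finset.Icc (-N) N, c' j * Real.log (u j)
            = (1 / Δx) * ∑ j ∈ Finset.Icc (-N) N,
                (F (j - 1) t - F j t) * Real.log (u j) := by
              rw [Finset.mul_sum]
              apply Finset.sum_congr rfl
              intro j hj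
              simp only [hc'def]
              field_simp
              ring
          _ = (1 / Δx) * ∑ j ∈ Finset.Icc (-N) (N - 1),
                F j t * (Real.log (u (j + 1)) - Real.log (u j)) := by rw [habel]
      -- step 6: plug in fluxes and β
      have step6 : ∀ j ∈ Finset.Icc (-N) (N - 1),
          F j t * (Real.log (u (j + 1)) - Real.log (u j))
          = -(g j t * (1 / β j) * (u (j + 1) - u j) ^ 2) / Δx := by
        intro j hj
        rw [hF j hj t, (hβ j hj).2.2]
        have hb0 : β j ≠ 0 := ne_of_gt (hβ j hj).2.1
        rw [hu_def]
        field_simp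
      rw [step1, step4, step5, Finset.sum_congr rfl step6]
      rw [show ∑ j ∈ Finset.Icc (-N) (N - 1),
          -(g j t * (1 / β j) * (u (j + 1) - u j) ^ 2) / Δx
          = -(∑ j ∈ Finset.Icc (-N) (N - 1),
              g j t * (1 / β j) * (u (j + 1) - u j) ^ 2) / Δx by
        rw [← Finset.sum_div, Finset.sum_neg_distrib, neg_div]]
      field_simp
    exact hval ▸ hE'
  · -- nonnegativity
    apply mul_nonneg (by positivity)
    apply Finset.sum_nonneg
    intro j hj
    have h1 := (hβ j hj).2.1
    have h2 := hgpos j t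
    positivity
end

section
/- The 2D fully-discrete implicit scheme preserves positivity: suppose E_{j,k} > 0, A^x_{j±1/2,k} ≥ 0, A^y_{j,k±1/2} ≥ 0, and (c_{j,k}) solves c_{j,k} + A^x_{j+1/2,k}(c_{j,k}/E_{j,k} - c_{j+1,k}/E_{j+1,k}) + A^x_{j-1/2,k}(c_{j,k}/E_{j,k} - c_{j-1,k}/E_{j-1,k}) + A^y_{j,k+1/2}(c_{j,k}/E_{j,k} - c_{j,k+1}/E_{j,k+1}) + A^y_{j,k-1/2}(c_{j,k}/E_{j,k} - c_{j,k-1}/E_{j,k-1}) = b_{j,k} with zero boundary fluxes. If b_{j,k} ≥ 0 for all (j,k), then c_{j,k} ≥ 0 for all (j,k). -/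
open Finset

/-- Positivity preservation for the 2D fully-discrete implicit scheme: with
`E_{j,k} > 0`, nonnegative coefficients `A^x`, `A^y` vanishing across the
domain boundary (no-flux), and the five-point linear system with right-hand
side `b_{j,k} ≥ 0`, any solution satisfies `c_{j,k} ≥ 0` on the grid. Here
`Ax j k` denotes `A^x_{j+1/2,k}` and `Ay j k` denotes `A^y_{j,k+1/2}`. -/
theorem implicit_scheme_positivity_2d (Nx Ny : ℤ) (hNx : 0 ≤ Nx) (hNy : 0 ≤ Ny)
    (c E b Ax Ay : ℤ → ℤ → ℝ)
    (hE : ∀ j ∈ Finset.Icc (-Nx) Nx, ∀ k ∈ Finset.Icc (-Ny) Ny, 0 < E j k)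
    (hAx : ∀ j k, 0 ≤ Ax j k) (hAy : ∀ j k, 0 ≤ Ay j k)
    (hbdxL : ∀ k, Ax (-Nx - 1) k = 0) (hbdxR : ∀ k, Ax Nx k = 0)
    (hbdyL : ∀ j, Ay j (-Ny - 1) = 0) (hbdyR : ∀ j, Ay j Ny = 0)
    (heq : ∀ j ∈ Finset.Icc (-Nx) Nx, ∀ k ∈ Finset.Icc (-Ny) Ny,
      c j k
        + Ax j k * (c j k / E j k - c (j + 1) k / E (j + 1) k)
        + Ax (j - 1) k * (c j k / E j k - c (j - 1) k / E (j - 1) k)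
        + Ay j k * (c j k / E j k - c j (k + 1) / E j (k + 1))
        + Ay j (k - 1) * (c j k / E j k - c j (k - 1) / E j (k - 1)) = b j k)
    (hb : ∀ j ∈ Finset.Icc (-Nx) Nx, ∀ k ∈ Finset.Icc (-Ny) Ny, 0 ≤ b j k) :
    ∀ j ∈ Finset.Icc (-Nx) Nx, ∀ k ∈ Finset.Icc (-Ny) Ny, 0 ≤ c j k := by
  classical
  set S : Finset (ℤ × ℤ) := Finset.Icc (-Nx) Nx ×ˢ Finset.Icc (-Ny) Ny with hS
  have hSne : S.Nonempty := by
    refine ⟨(0, 0), ?_⟩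
    simp [hS, Finset.mem_product, Finset.mem_Icc]
    omega
  obtain ⟨p₀, hp₀S, hmin⟩ := S.exists_min_image (fun p => c p.1 p.2 / E p.1 p.2) hSne
  obtain ⟨j₀, k₀⟩ := p₀
  rw [hS, Finset.mem_product] at hp₀S
  obtain ⟨hj₀, hk₀⟩ := hp₀S
  dsimp only at hj₀ hk₀
  have hmin' : ∀ j ∈ Finset.Icc (-Nx) Nx, ∀ k ∈ Finset.Icc (-Ny) Ny,
      c j₀ k₀ / E j₀ k₀ ≤ c j k / E j k := by
    intro j hj k hk
    exact hmin (j, k) (by rw [hS, Finset.mem_product]; exact ⟨hj, hk⟩)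
  rw [Finset.mem_Icc] at hj₀ hk₀
  have hE₀ := hE j₀ (by rw [Finset.mem_Icc]; exact hj₀) k₀ (by rw [Finset.mem_Icc]; exact hk₀)
  -- each of the four flux terms at the minimum is ≤ 0
  have t1 : Ax j₀ k₀ * (c j₀ k₀ / E j₀ k₀ - c (j₀ + 1) k₀ / E (j₀ + 1) k₀) ≤ 0 := by
    rcases eq_or_lt_of_le hj₀.2 with h | h
    · rw [h, hbdxR]; simp
    · have := hmin' (j₀ + 1) (by rw [Finset.mem_Icc]; omega) k₀ (by rw [Finset.mem_Icc]; exact hk₀)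
      exact mul_nonpos_of_nonneg_of_nonpos (hAx _ _) (by linarith)
  have t2 : Ax (j₀ - 1) k₀ * (c j₀ k₀ / E j₀ k₀ - c (j₀ - 1) k₀ / E (j₀ - 1) k₀) ≤ 0 := by
    rcases eq_or_lt_of_le hj₀.1 with h | h
    · have : j₀ - 1 = -Nx - 1 := by omega
      rw [this, hbdxL]; simp
    · have := hmin' (j₀ - 1) (by rw [Finset.mem_Icc]; omega) k₀ (by rw [Finset.mem_Icc]; exact hk₀)
      exact mul_nonpos_of_nonneg_of_nonpos (hAx _ _) (by linarith)
  have t3 : Ay j₀ k₀ * (c j₀ k₀ / E j₀ k₀ - c j₀ (k₀ + 1) / E j₀ (k₀ + 1)) ≤ 0 := by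
    rcases eq_or_lt_of_le hk₀.2 with h | h
    · rw [h, hbdyR]; simp
    · have := hmin' j₀ (by rw [Finset.mem_Icc]; exact hj₀) (k₀ + 1) (by rw [Finset.mem_Icc]; omega)
      exact mul_nonpos_of_nonneg_of_nonpos (hAy _ _) (by linarith)
  have t4 : Ay j₀ (k₀ - 1) * (c j₀ k₀ / E j₀ k₀ - c j₀ (k₀ - 1) / E j₀ (k₀ - 1)) ≤ 0 := by
    rcases eq_or_lt_of_le hk₀.1 with h | h
    · have : k₀ - 1 = -Ny - 1 := by omega
      rw [this, hbdyL]; simp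
    · have := hmin' j₀ (by rw [Finset.mem_Icc]; exact hj₀) (k₀ - 1) (by rw [Finset.mem_Icc]; omega)
      exact mul_nonpos_of_nonneg_of_nonpos (hAy _ _) (by linarith)
  have heq₀ := heq j₀ (by rw [Finset.mem_Icc]; exact hj₀) k₀ (by rw [Finset.mem_Icc]; exact hk₀)
  have hb₀ := hb j₀ (by rw [Finset.mem_Icc]; exact hj₀) k₀ (by rw [Finset.mem_Icc]; exact hk₀)
  have hc₀ : 0 ≤ c j₀ k₀ := by linarith
  have humin : 0 ≤ c j₀ k₀ / E j₀ k₀ := div_nonneg hc₀ hE₀.le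
  intro j hj k hk
  have := hmin' j hj k hk
  have hEjk := hE j hj k hk
  have : 0 ≤ c j k / E j k := le_trans humin this
  calc (0:ℝ) = 0 * E j k := by ring
    _ ≤ (c j k / E j k) * E j k := by
        exact mul_le_mul_of_nonneg_right this hEjk.le
    _ = c j k := div_mul_cancel₀ _ hEjk.ne'
end
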